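/- For all finite-dimensional complex Hilbert spaces H₁, H₂, H₁', H₂' and all states ρ on H₁ ⊗ H₂ and ρ' on H₁' ⊗ H₂', one has the subadditivity inequality E_m(ρ ⊗ ρ') ≤ E_m(ρ) + E_m(ρ'), where E_m of ρ ⊗ ρ' is computed across the (H₁⊗H₁')–(H₂⊗H₂') cut after the canonical reordering of tensor factors. -/

import Mathlib

open Matrix Kronecker BigOperators ComplexOrder

noncomputable section

namespace QAdditivity

/-- von Neumann entropy of a matrix (junk value `0` if not Hermitian):
`S(ρ) = -∑ᵢ λᵢ log λᵢ` over the eigenvalues of `ρ`. -/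
def entropy {ι : Type} [Fintype ι] [DecidableEq ι] (ρ : Matrix ι ι ℂ) : ℝ :=
  if h : ρ.IsHermitian then ∑ i, Real.negMulLog (h.eigenvalues i) else 0

/-- A state: positive semidefinite with trace one. -/
def IsState {ι : Type} [Fintype ι] (ρ : Matrix ι ι ℂ) : Prop :=
  ρ.PosSemidef ∧ ρ.trace = 1

/-- A pure state: rank-one state, i.e. `|φ⟩⟨φ|` for a unit vector `φ`. -/
def IsPureState {ι : Type} [Fintype ι] (ρ : Matrix ι ι ℂ) : Prop :=
  ∃ φ : ι → ℂ, star φ ⬝ᵥ φ = 1 ∧ ρ = vecMulVec φ (star φ)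

/-- Partial trace over the second tensor factor. -/
def trRight {ι κ : Type} [Fintype ι] [Fintype κ]
    (ρ : Matrix (ι × κ) (ι × κ) ℂ) : Matrix ι ι ℂ :=
  Matrix.of fun i j => ∑ k, ρ (i, k) (j, k)

/-- Partial trace over the first tensor factor. -/
def trLeft {ι κ : Type} [Fintype ι] [Fintype κ]
    (ρ : Matrix (ι × κ) (ι × κ) ℂ) : Matrix κ κ ℂ :=
  Matrix.of fun k l => ∑ i, ρ (i, k) (i, l)

/-- Entanglement of a (pure) bipartite state: `E(π) = S(tr_{H₂} π)`. -/
def pureEnt {ι κ : Type} [Fintype ι] [Fintype κ] [DecidableEq ι]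
    (π : Matrix (ι × κ) (ι × κ) ℂ) : ℝ :=
  entropy (trRight π)

/-- `E_m(ρ)`: minimum over finite pure-state ensembles for `ρ` of the minimal
entanglement appearing in the ensemble. -/
def Em {ι κ : Type} [Fintype ι] [Fintype κ] [DecidableEq ι]
    (ρ : Matrix (ι × κ) (ι × κ) ℂ) : ℝ :=
  sInf { e : ℝ | ∃ (n : ℕ) (p : Fin (n + 1) → ℝ)
      (π : Fin (n + 1) → Matrix (ι × κ) (ι × κ) ℂ),
    (∀ i, 0 < p i) ∧ (∀ i, IsPureState (π i)) ∧
    (∑ i, (p i : ℂ) • π i) = ρ ∧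
    e = Finset.univ.inf' Finset.univ_nonempty fun i => pureEnt (π i) }

/-- Entanglement of formation `E_f(ρ)`. -/
def Ef {ι κ : Type} [Fintype ι] [Fintype κ] [DecidableEq ι]
    (ρ : Matrix (ι × κ) (ι × κ) ℂ) : ℝ :=
  sInf { e : ℝ | ∃ (n : ℕ) (p : Fin (n + 1) → ℝ)
      (π : Fin (n + 1) → Matrix (ι × κ) (ι × κ) ℂ),
    (∀ i, 0 < p i) ∧ (∀ i, IsPureState (π i)) ∧
    (∑ i, (p i : ℂ) • π i) = ρ ∧
    e = ∑ i, p i * pureEnt (π i) }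

/-- Canonical reordering `(H₁⊗H₂)⊗(H₁'⊗H₂') ≃ (H₁⊗H₁')⊗(H₂⊗H₂')` on matrices. -/
def reorder {a b a' b' : Type}
    (M : Matrix ((a × b) × (a' × b')) ((a × b) × (a' × b')) ℂ) :
    Matrix ((a × a') × (b × b')) ((a × a') × (b × b')) ℂ :=
  Matrix.reindex (Equiv.prodProdProdComm a b a' b') (Equiv.prodProdProdComm a b a' b') M

/-- Complete positivity of a superoperator. -/
def IsCompletelyPositive {κ η : Type} [Fintype κ] [Fintype η]
    (f : Matrix κ κ ℂ → Matrix η η ℂ) : Prop :=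
  ∀ (n : ℕ) (M : Matrix (κ × Fin n) (κ × Fin n) ℂ), M.PosSemidef →
    Matrix.PosSemidef (Matrix.of fun p q : η × Fin n =>
      f (Matrix.of fun a b => M (a, p.2) (b, q.2)) p.1 q.1)

/-- A quantum channel: a completely positive trace preserving linear map. -/
def IsChannel {κ η : Type} [Fintype κ] [Fintype η]
    (f : Matrix κ κ ℂ → Matrix η η ℂ) : Prop :=
  IsLinearMap ℂ f ∧ IsCompletelyPositive f ∧ ∀ M, (f M).trace = M.trace

/-- Minimum output entropy of a channel. -/
def Smin {κ η : Type} [Fintype κ] [Fintype η] [DecidableEq η]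
    (f : Matrix κ κ ℂ → Matrix η η ℂ) : ℝ :=
  sInf { e : ℝ | ∃ ρ : Matrix κ κ ℂ, IsState ρ ∧ e = entropy (f ρ) }

/-- The tensor product `Λ ⊗ Λ'` of two superoperators (defined on all of
`B(K ⊗ K')` by linearity via matrix units). -/
def tensorChannel {κ η κ' η' : Type} [Fintype κ] [Fintype κ']
    [DecidableEq κ] [DecidableEq κ']
    (f : Matrix κ κ ℂ → Matrix η η ℂ) (g : Matrix κ' κ' ℂ → Matrix η' η' ℂ) :
    Matrix (κ × κ') (κ × κ') ℂ → Matrix (η × η') (η × η') ℂ :=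
  fun M => Matrix.of fun p q =>
    ∑ a, ∑ b, ∑ a', ∑ b', M (a, a') (b, b') *
      f (Matrix.single a b 1) p.1 q.1 *
      g (Matrix.single a' b' 1) p.2 q.2

/-- Support of an operator: its range. -/
def supp {ι : Type} [Fintype ι] (ρ : Matrix ι ι ℂ) : Submodule ℂ (ι → ℂ) :=
  LinearMap.range ρ.mulVecLin

section Aux
open Polynomial

theorem charpoly_unitary_conj {n : Type} [Fintype n] [DecidableEq n] (W M : Matrix n n ℂ)
    (h1 : W * star W = 1) :
    (W * M * star W).charpoly = M.charpoly := by
  have hd : (diagonal fun _ : n => (X : ℂ[X])) = (X : ℂ[X]) • (1 : Matrix n n ℂ[X]) := by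
    rw [Matrix.smul_one_eq_diagonal]
  have key : charmatrix (W * M * star W) =
      W.map C * charmatrix M * (star W).map C := by
    simp only [charmatrix, mul_sub, sub_mul]
    congr 1
    · rw [scalar_apply, hd, mul_smul_comm, smul_mul_assoc, mul_one, ← Matrix.map_mul, h1]
      simp
    · simp [RingHom.mapMatrix_apply, Matrix.map_mul]
  rw [Matrix.charpoly, key, det_mul, det_mul, Matrix.charpoly, mul_comm (W.map C).det,
    mul_assoc, ← det_mul, ← Matrix.map_mul, h1]
  simp

theorem charpoly_diag {n : Type} [Fintype n] [DecidableEq n] (v : n → ℂ) :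
    (diagonal v).charpoly = ∏ i, (X - C (v i)) := by
  have : charmatrix (diagonal v) = diagonal (fun i => X - C (v i)) := by
    refine Matrix.ext fun i j => ?_
    by_cases h : i = j
    · subst h
      rw [charmatrix_apply_eq, diagonal_apply_eq v i]
      exact (diagonal_apply_eq (fun i => X - C (v i)) i).symm
    · rw [charmatrix_apply_ne _ _ _ h, diagonal_apply_ne _ h, diagonal_apply_ne _ h,
        map_zero, neg_zero]
  rw [Matrix.charpoly, this, det_diagonal]

theorem eig_multiset {n : Type} [Fintype n] [DecidableEq n] {A : Matrix n n ℂ}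
    (h : A.IsHermitian) (W : Matrix n n ℂ) (d : n → ℝ)
    (h1 : W * star W = 1)
    (hA : A = W * diagonal (fun i => (d i : ℂ)) * star W) :
    Multiset.map h.eigenvalues Finset.univ.val = Multiset.map d Finset.univ.val := by
  have e1 : A.charpoly = ∏ i, (X - C ((h.eigenvalues i : ℂ))) := by
    conv_lhs => rw [h.spectral_theorem, Unitary.conjStarAlgAut_apply]
    rw [charpoly_unitary_conj _ _ ((mem_unitaryGroup_iff).mp (h.eigenvectorUnitary).2)]
    exact charpoly_diag _
  have e2 : A.charpoly = ∏ i, (X - C ((d i : ℂ))) := by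
    conv_lhs => rw [hA]
    rw [charpoly_unitary_conj _ _ h1, charpoly_diag]
  have e3 : (Multiset.map (fun i => ((h.eigenvalues i : ℂ))) Finset.univ.val)
      = Multiset.map (fun i => ((d i : ℂ))) Finset.univ.val := by
    have r1 := Polynomial.roots_multiset_prod_X_sub_C
      (Multiset.map (fun i => ((h.eigenvalues i : ℂ))) Finset.univ.val)
    have r2 := Polynomial.roots_multiset_prod_X_sub_C
      (Multiset.map (fun i => ((d i : ℂ))) Finset.univ.val)
    rw [Multiset.map_map] at r1 r2
    have heq : ∏ i, (X - C ((h.eigenvalues i : ℂ))) = ∏ i, (X - C ((d i : ℂ))) := by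
      rw [← e1, ← e2]
    rw [← r1, ← r2]
    congr 1
  have := congrArg (Multiset.map Complex.re) e3
  simpa [Multiset.map_map, Function.comp] using this

theorem entropy_eq_sum {n : Type} [Fintype n] [DecidableEq n] {A : Matrix n n ℂ}
    (h : A.IsHermitian) (W : Matrix n n ℂ) (d : n → ℝ)
    (h1 : W * star W = 1)
    (hA : A = W * diagonal (fun i => (d i : ℂ)) * star W) :
    entropy A = ∑ i, Real.negMulLog (d i) := by
  rw [entropy, dif_pos h]
  have key := congrArg (fun s => (Multiset.map Real.negMulLog s).sum) (eig_multiset h W d h1 hA)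
  simp only [Multiset.map_map] at key
  exact key

theorem sum_eigenvalues_eq_one {n : Type} [Fintype n] [DecidableEq n] {A : Matrix n n ℂ}
    (h : A.IsHermitian) (ht : A.trace = 1) :
    ∑ i, h.eigenvalues i = 1 := by
  have h2 : star (h.eigenvectorUnitary : Matrix n n ℂ) * (h.eigenvectorUnitary : Matrix n n ℂ)
      = 1 := mem_unitaryGroup_iff'.mp h.eigenvectorUnitary.2
  have key : A.trace = ∑ i, (h.eigenvalues i : ℂ) := by
    conv_lhs => rw [h.spectral_theorem, Unitary.conjStarAlgAut_apply]
    rw [trace_mul_cycle, h2, one_mul, trace_diagonal]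
    rfl
  rw [ht] at key
  exact_mod_cast key.symm

theorem kron_conjTranspose {m n m' n' : Type} (A : Matrix m m' ℂ) (B : Matrix n n' ℂ) :
    (A ⊗ₖ B)ᴴ = Aᴴ ⊗ₖ Bᴴ := by
  ext ⟨i, j⟩ ⟨k, l⟩
  simp [conjTranspose_apply, mul_comm]

theorem entropy_kron {m n : Type} [Fintype m] [Fintype n] [DecidableEq m] [DecidableEq n]
    {A : Matrix m m ℂ} {B : Matrix n n ℂ}
    (hA : A.PosSemidef) (hB : B.PosSemidef) (htA : A.trace = 1) (htB : B.trace = 1) :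
    entropy (A ⊗ₖ B) = entropy A + entropy B := by
  have hAh := hA.1
  have hBh := hB.1
  set U := (hAh.eigenvectorUnitary : Matrix m m ℂ) with hUdef
  set V := (hBh.eigenvectorUnitary : Matrix n n ℂ) with hVdef
  have hU : U * star U = 1 := mem_unitaryGroup_iff.mp hAh.eigenvectorUnitary.2
  have hV : V * star V = 1 := mem_unitaryGroup_iff.mp hBh.eigenvectorUnitary.2
  have hkh : (A ⊗ₖ B).IsHermitian := by
    rw [Matrix.IsHermitian, kron_conjTranspose, hAh.eq, hBh.eq]
  have hW : (U ⊗ₖ V) * star (U ⊗ₖ V) = 1 := by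
    rw [show (star (U ⊗ₖ V) : Matrix (m × n) (m × n) ℂ) = star U ⊗ₖ star V from
      kron_conjTranspose U V, ← mul_kronecker_mul, hU, hV, one_kronecker_one]
  have hdec : A ⊗ₖ B = (U ⊗ₖ V) *
      diagonal (fun p : m × n => ((hAh.eigenvalues p.1 * hBh.eigenvalues p.2 : ℝ) : ℂ))
      * star (U ⊗ₖ V) := by
    conv_lhs => rw [hAh.spectral_theorem, hBh.spectral_theorem, Unitary.conjStarAlgAut_apply,
        Unitary.conjStarAlgAut_apply]
    rw [show (star (U ⊗ₖ V) : Matrix (m × n) (m × n) ℂ) = star U ⊗ₖ star V from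
      kron_conjTranspose U V, mul_kronecker_mul, mul_kronecker_mul, diagonal_kronecker_diagonal]
    congr 1
    have hfun : (fun mn : m × n => (RCLike.ofReal ∘ hAh.eigenvalues) mn.1 *
          (RCLike.ofReal ∘ hBh.eigenvalues) mn.2)
        = fun p : m × n => ((hAh.eigenvalues p.1 * hBh.eigenvalues p.2 : ℝ) : ℂ) := by
      funext p
      show ((hAh.eigenvalues p.1 : ℝ) : ℂ) * ((hBh.eigenvalues p.2 : ℝ) : ℂ) = _
      push_cast
      ring
    rw [hfun]
  have hsA : ∑ i, hAh.eigenvalues i = 1 := sum_eigenvalues_eq_one hAh htA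
  have hsB : ∑ j, hBh.eigenvalues j = 1 := sum_eigenvalues_eq_one hBh htB
  rw [entropy_eq_sum hkh _ _ hW hdec, entropy, dif_pos hAh, entropy, dif_pos hBh]
  rw [Fintype.sum_prod_type]
  have step : ∀ i : m, ∑ j : n, Real.negMulLog (hAh.eigenvalues i * hBh.eigenvalues j)
      = Real.negMulLog (hAh.eigenvalues i)
        + hAh.eigenvalues i * ∑ j, Real.negMulLog (hBh.eigenvalues j) := by
    intro i
    simp only [Real.negMulLog_mul]
    rw [Finset.sum_add_distrib, ← Finset.sum_mul, hsB, one_mul, ← Finset.mul_sum]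
  simp only [step]
  rw [Finset.sum_add_distrib, ← Finset.sum_mul, hsA, one_mul]

theorem trRight_reorder_kron {a b a' b' : Type} [Fintype a] [Fintype b] [Fintype a'] [Fintype b']
    (M : Matrix (a × b) (a × b) ℂ) (N : Matrix (a' × b') (a' × b') ℂ) :
    trRight (reorder (M ⊗ₖ N)) = trRight M ⊗ₖ trRight N := by
  ext ⟨i, i'⟩ ⟨j, j'⟩
  show (∑ k : b × b', (reorder (M ⊗ₖ N)) ((i, i'), k) ((j, j'), k)) = _
  rw [Fintype.sum_prod_type]
  show (∑ k : b, ∑ k' : b', M (i, k) (j, k) * N (i', k') (j', k'))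
      = (∑ k, M (i, k) (j, k)) * (∑ k', N (i', k') (j', k'))
  rw [Finset.sum_mul_sum]

theorem trRight_pure_state {ι κ : Type} [Fintype ι] [Fintype κ]
    {π : Matrix (ι × κ) (ι × κ) ℂ} (hπ : IsPureState π) :
    (trRight π).PosSemidef ∧ (trRight π).trace = 1 := by
  obtain ⟨φ, hφ, rfl⟩ := hπ
  constructor
  · have : trRight (vecMulVec φ (star φ)) =
        (Matrix.of fun i k => φ (i, k)) * (Matrix.of fun (i : ι) (k : κ) => φ (i, k))ᴴ := by
      ext i j
      simp [trRight, vecMulVec_apply, Matrix.mul_apply, conjTranspose_apply]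
    rw [this]
    exact posSemidef_self_mul_conjTranspose _
  · have h2 : ∑ x : ι × κ, φ x * star (φ x) = 1 := by
      rw [← hφ, dotProduct]
      exact Finset.sum_congr rfl fun x _ => mul_comm _ _
    rw [← h2, Fintype.sum_prod_type]
    simp [Matrix.trace, Matrix.diag, trRight, vecMulVec_apply]

theorem entropy_nonneg_of {ι : Type} [Fintype ι] [DecidableEq ι] {ρ : Matrix ι ι ℂ}
    (h : ρ.PosSemidef) (ht : ρ.trace = 1) : 0 ≤ entropy ρ := by
  rw [entropy, dif_pos h.1]
  have hs : ∑ i, h.1.eigenvalues i = 1 := sum_eigenvalues_eq_one h.1 ht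
  refine Finset.sum_nonneg fun i _ => Real.negMulLog_nonneg (h.eigenvalues_nonneg i) ?_
  calc h.1.eigenvalues i ≤ ∑ j, h.1.eigenvalues j :=
        Finset.single_le_sum (fun j _ => h.eigenvalues_nonneg j) (Finset.mem_univ i)
    _ = 1 := hs

theorem pureEnt_nonneg {ι κ : Type} [Fintype ι] [Fintype κ] [DecidableEq ι]
    {π : Matrix (ι × κ) (ι × κ) ℂ} (hπ : IsPureState π) : 0 ≤ pureEnt π := by
  obtain ⟨h1, h2⟩ := trRight_pure_state hπ
  exact entropy_nonneg_of h1 h2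

theorem sum_prod_factor {α β : Type} [Fintype α] [Fintype β] (f : α → ℂ) (g : β → ℂ) :
    ∑ x : α × β, f x.1 * g x.2 = (∑ a, f a) * (∑ b, g b) := by
  rw [Fintype.sum_prod_type, Finset.sum_mul_sum]

theorem isPureState_reorder_kron {a b a' b' : Type}
    [Fintype a] [Fintype b] [Fintype a'] [Fintype b']
    {π : Matrix (a × b) (a × b) ℂ} {π' : Matrix (a' × b') (a' × b') ℂ}
    (h : IsPureState π) (h' : IsPureState π') : IsPureState (reorder (π ⊗ₖ π')) := by
  obtain ⟨φ, hφ, rfl⟩ := h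
  obtain ⟨ψ, hψ, rfl⟩ := h'
  refine ⟨fun x => φ (x.1.1, x.2.1) * ψ (x.1.2, x.2.2), ?_, ?_⟩
  · rw [dotProduct, ← Equiv.sum_comp (Equiv.prodProdProdComm a b a' b')]
    have e1 : ∑ u : a × b, star (φ u) * φ u = 1 := hφ
    have e2 : ∑ v : a' × b', star (ψ v) * ψ v = 1 := hψ
    have h2 : ∀ y : (a × b) × (a' × b'),
        (star fun x : (a × a') × (b × b') => φ (x.1.1, x.2.1) * ψ (x.1.2, x.2.2))
            (Equiv.prodProdProdComm a b a' b' y) *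
          (φ (((Equiv.prodProdProdComm a b a' b') y).1.1,
              ((Equiv.prodProdProdComm a b a' b') y).2.1) *
            ψ (((Equiv.prodProdProdComm a b a' b') y).1.2,
              ((Equiv.prodProdProdComm a b a' b') y).2.2))
        = (star (φ y.1) * φ y.1) * (star (ψ y.2) * ψ y.2) := by
      rintro ⟨⟨i, k⟩, ⟨i', k'⟩⟩
      simp only [Equiv.prodProdProdComm_apply, Pi.star_apply, star_mul']
      ring
    rw [Finset.sum_congr rfl fun y _ => h2 y,
      sum_prod_factor (fun u => star (φ u) * φ u) (fun v => star (ψ v) * ψ v), e1, e2, one_mul]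
  · ext ⟨⟨i, i'⟩, ⟨k, k'⟩⟩ ⟨⟨j, j'⟩, ⟨l, l'⟩⟩
    show (vecMulVec φ (star φ) ⊗ₖ vecMulVec ψ (star ψ)) ((i, k), (i', k')) ((j, l), (j', l')) = _
    simp only [kroneckerMap_apply, vecMulVec_apply, Pi.star_apply, star_mul']
    ring

theorem exists_ensemble {ι : Type} [Fintype ι] [DecidableEq ι] {ρ : Matrix ι ι ℂ}
    (hρ : IsState ρ) :
    ∃ (n : ℕ) (p : Fin (n + 1) → ℝ) (π : Fin (n + 1) → Matrix ι ι ℂ),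
      (∀ i, 0 < p i) ∧ (∀ i, IsPureState (π i)) ∧ (∑ i, (p i : ℂ) • π i) = ρ := by
  obtain ⟨hpsd, htr⟩ := hρ
  have h := hpsd.1
  set U := (h.eigenvectorUnitary : Matrix ι ι ℂ) with hUdef
  set lam := h.eigenvalues with hlamdef
  have hdecomp : ρ = ∑ i, (lam i : ℂ) • vecMulVec (fun j => U j i) (star fun j => U j i) := by
    conv_lhs => rw [h.spectral_theorem, Unitary.conjStarAlgAut_apply]
    ext j k
    rw [Matrix.mul_apply]
    simp only [Matrix.mul_diagonal, Matrix.sum_apply, Matrix.smul_apply, vecMulVec_apply,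
      Pi.star_apply, smul_eq_mul, Matrix.star_apply, Function.comp_apply]
    refine Finset.sum_congr rfl fun i _ => ?_
    rw [show (RCLike.ofReal (lam i) : ℂ) = ((lam i : ℝ) : ℂ) from rfl]
    ring
  have hunit : ∀ i, (star fun j => U j i) ⬝ᵥ (fun j => U j i) = 1 := by
    intro i
    have h1 : star U * U = 1 := mem_unitaryGroup_iff'.mp h.eigenvectorUnitary.2
    have h2 := congrFun (congrFun h1 i) i
    simpa [Matrix.mul_apply, dotProduct, Matrix.one_apply, Matrix.star_apply] using h2
  have hnn : ∀ i, 0 ≤ lam i := fun i => hpsd.eigenvalues_nonneg i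
  have hsum1 : ∑ i, lam i = 1 := sum_eigenvalues_eq_one h htr
  classical
  set s := Finset.univ.filter (fun i => 0 < lam i) with hs
  have hsne : s.Nonempty := by
    by_contra hc
    rw [Finset.not_nonempty_iff_eq_empty] at hc
    have hz : ∀ i, lam i = 0 := by
      intro i
      by_contra hne
      have h0 : 0 < lam i := lt_of_le_of_ne (hnn i) (Ne.symm hne)
      have : i ∈ s := Finset.mem_filter.mpr ⟨Finset.mem_univ i, h0⟩
      rw [hc] at this
      exact absurd this (Finset.notMem_empty i)
    rw [Finset.sum_congr rfl (fun i _ => hz i)] at hsum1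
    simp at hsum1
  obtain ⟨m, hm⟩ : ∃ m, s.card = m + 1 :=
    ⟨s.card - 1, (Nat.succ_pred_eq_of_pos (Finset.card_pos.mpr hsne)).symm⟩
  set e : Fin (m + 1) ≃ {x // x ∈ s} := (s.equivFin.trans (finCongr hm)).symm with he
  refine ⟨m, fun i => lam (e i), fun i =>
    vecMulVec (fun j => U j (e i)) (star fun j => U j (e i)), ?_, ?_, ?_⟩
  · intro i
    exact (Finset.mem_filter.mp (e i).2).2
  · intro i
    exact ⟨_, hunit _, rfl⟩
  · rw [hdecomp]
    calc (∑ i : Fin (m + 1), ((lam (e i) : ℝ) : ℂ) •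
            vecMulVec (fun j => U j (e i)) (star fun j => U j (e i)))
        = ∑ x : {x // x ∈ s}, ((lam (x : ι) : ℝ) : ℂ) •
            vecMulVec (fun j => U j (x : ι)) (star fun j => U j (x : ι)) :=
          Equiv.sum_comp e (fun x : {x // x ∈ s} => ((lam (x : ι) : ℝ) : ℂ) •
            vecMulVec (fun j => U j (x : ι)) (star fun j => U j (x : ι)))
      _ = ∑ x ∈ s, ((lam x : ℝ) : ℂ) • vecMulVec (fun j => U j x) (star fun j => U j x) :=
          Finset.sum_coe_sort s
            (fun x => ((lam x : ℝ) : ℂ) • vecMulVec (fun j => U j x) (star fun j => U j x))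
      _ = ∑ x : ι, ((lam x : ℝ) : ℂ) • vecMulVec (fun j => U j x) (star fun j => U j x) := by
          refine Finset.sum_subset (Finset.subset_univ s) fun x _ hx => ?_
          have hz : lam x = 0 := by
            by_contra hne
            exact hx (Finset.mem_filter.mpr
              ⟨Finset.mem_univ x, lt_of_le_of_ne (hnn x) (Ne.symm hne)⟩)
          simp [hz]

theorem pureEnt_reorder_kron {a b a' b' : Type}
    [Fintype a] [Fintype b] [Fintype a'] [Fintype b']
    [DecidableEq a] [DecidableEq a']
    {π : Matrix (a × b) (a × b) ℂ} {π' : Matrix (a' × b') (a' × b') ℂ}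
    (h : IsPureState π) (h' : IsPureState π') :
    pureEnt (reorder (π ⊗ₖ π')) = pureEnt π + pureEnt π' := by
  obtain ⟨h1, h2⟩ := trRight_pure_state h
  obtain ⟨h1', h2'⟩ := trRight_pure_state h'
  show entropy (trRight (reorder (π ⊗ₖ π'))) = entropy (trRight π) + entropy (trRight π')
  rw [trRight_reorder_kron, entropy_kron h1 h1' h2 h2']

end Aux
theorem sum_smul_reorder_kron {a b a' b' : Type}
    [Fintype a] [Fintype b] [Fintype a'] [Fintype b'] {n m : ℕ}
    (p : Fin (n + 1) → ℝ) (q : Fin (m + 1) → ℝ)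
    (π : Fin (n + 1) → Matrix (a × b) (a × b) ℂ)
    (σ : Fin (m + 1) → Matrix (a' × b') (a' × b') ℂ) :
    ∑ y : Fin (n + 1) × Fin (m + 1), ((p y.1 * q y.2 : ℝ) : ℂ) • reorder (π y.1 ⊗ₖ σ y.2)
      = reorder ((∑ i, (p i : ℂ) • π i) ⊗ₖ (∑ j, (q j : ℂ) • σ j)) := by
  ext x z
  simp only [reorder, reindex_apply, submatrix_apply, Matrix.sum_apply, Matrix.smul_apply,
    kroneckerMap_apply, smul_eq_mul, Complex.ofReal_mul]
  rw [Fintype.sum_prod_type, Finset.sum_mul_sum]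
  refine Finset.sum_congr rfl fun i _ => Finset.sum_congr rfl fun j _ => ?_
  ring

/-- Subadditivity of `E_m` on tensor products of states. -/
theorem Em_subadditive
    {a b a' b' : Type} [Fintype a] [Fintype b] [Fintype a'] [Fintype b']
    [DecidableEq a] [DecidableEq b] [DecidableEq a'] [DecidableEq b']
    (ρ : Matrix (a × b) (a × b) ℂ) (ρ' : Matrix (a' × b') (a' × b') ℂ)
    (hρ : IsState ρ) (hρ' : IsState ρ') :
    Em (reorder (ρ ⊗ₖ ρ')) ≤ Em ρ + Em ρ' := by
  classical
  set S₁ : Set ℝ := { e : ℝ | ∃ (n : ℕ) (p : Fin (n + 1) → ℝ)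
      (π : Fin (n + 1) → Matrix (a × b) (a × b) ℂ),
    (∀ i, 0 < p i) ∧ (∀ i, IsPureState (π i)) ∧
    (∑ i, (p i : ℂ) • π i) = ρ ∧
    e = Finset.univ.inf' Finset.univ_nonempty fun i => pureEnt (π i) } with hS₁
  set S₂ : Set ℝ := { e : ℝ | ∃ (n : ℕ) (p : Fin (n + 1) → ℝ)
      (π : Fin (n + 1) → Matrix (a' × b') (a' × b') ℂ),
    (∀ i, 0 < p i) ∧ (∀ i, IsPureState (π i)) ∧
    (∑ i, (p i : ℂ) • π i) = ρ' ∧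
    e = Finset.univ.inf' Finset.univ_nonempty fun i => pureEnt (π i) } with hS₂
  set S : Set ℝ := { e : ℝ | ∃ (n : ℕ) (p : Fin (n + 1) → ℝ)
      (π : Fin (n + 1) → Matrix ((a × a') × (b × b')) ((a × a') × (b × b')) ℂ),
    (∀ i, 0 < p i) ∧ (∀ i, IsPureState (π i)) ∧
    (∑ i, (p i : ℂ) • π i) = reorder (ρ ⊗ₖ ρ') ∧
    e = Finset.univ.inf' Finset.univ_nonempty fun i => pureEnt (π i) } with hS
  have hEmG : Em (reorder (ρ ⊗ₖ ρ')) = sInf S := rfl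
  have hEm1 : Em ρ = sInf S₁ := rfl
  have hEm2 : Em ρ' = sInf S₂ := rfl
  obtain ⟨n₁, p₁, π₁, hp₁, hπ₁, hsum₁⟩ := exists_ensemble hρ
  obtain ⟨n₂, p₂, π₂, hp₂, hπ₂, hsum₂⟩ := exists_ensemble hρ'
  have hne₁ : S₁.Nonempty := ⟨_, n₁, p₁, π₁, hp₁, hπ₁, hsum₁, rfl⟩
  have hne₂ : S₂.Nonempty := ⟨_, n₂, p₂, π₂, hp₂, hπ₂, hsum₂, rfl⟩
  have hbdd : BddBelow S := by
    refine ⟨0, fun e he => ?_⟩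
    obtain ⟨n, p, π, hp, hπ, hsum, rfl⟩ := he
    exact Finset.le_inf' _ _ fun i _ => pureEnt_nonneg (hπ i)
  have key : ∀ x ∈ S₁, ∀ y ∈ S₂, sInf S ≤ x + y := by
    rintro x ⟨n, p, π, hp, hπ, hsum, rfl⟩ y ⟨m, q, σ, hq, hσ, hsum', rfl⟩
    have hN : (n + 1) * (m + 1) = (n * (m + 1) + m) + 1 := by ring
    set e : Fin (n * (m + 1) + m + 1) ≃ Fin (n + 1) × Fin (m + 1) :=
      (finCongr hN.symm).trans finProdFinEquiv.symm with he
    set P : Fin (n * (m + 1) + m + 1) → ℝ := fun k => p (e k).1 * q (e k).2 with hP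
    set τ : Fin (n * (m + 1) + m + 1) →
        Matrix ((a × a') × (b × b')) ((a × a') × (b × b')) ℂ :=
      fun k => reorder (π (e k).1 ⊗ₖ σ (e k).2) with htau
    have hsumP : (∑ k, (P k : ℂ) • τ k) = reorder (ρ ⊗ₖ ρ') := by
      calc (∑ k, (P k : ℂ) • τ k)
          = ∑ y : Fin (n + 1) × Fin (m + 1),
              ((p y.1 * q y.2 : ℝ) : ℂ) • reorder (π y.1 ⊗ₖ σ y.2) :=
            Equiv.sum_comp e (fun y : Fin (n + 1) × Fin (m + 1) =>
              ((p y.1 * q y.2 : ℝ) : ℂ) • reorder (π y.1 ⊗ₖ σ y.2))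
        _ = reorder ((∑ i, (p i : ℂ) • π i) ⊗ₖ (∑ j, (q j : ℂ) • σ j)) :=
            sum_smul_reorder_kron p q π σ
        _ = reorder (ρ ⊗ₖ ρ') := by rw [hsum, hsum']
    have hmem : (Finset.univ.inf' Finset.univ_nonempty fun k => pureEnt (τ k)) ∈ S :=
      ⟨n * (m + 1) + m, P, τ,
        fun k => mul_pos (hp _) (hq _), fun k => isPureState_reorder_kron (hπ _) (hσ _),
        hsumP, rfl⟩
    obtain ⟨i₀, _, hx0⟩ := Finset.exists_mem_eq_inf'
      (Finset.univ_nonempty (α := Fin (n + 1))) (fun i => pureEnt (π i))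
    obtain ⟨j₀, _, hy0⟩ := Finset.exists_mem_eq_inf'
      (Finset.univ_nonempty (α := Fin (m + 1))) (fun j => pureEnt (σ j))
    have hle : (Finset.univ.inf' Finset.univ_nonempty fun k => pureEnt (τ k))
        ≤ pureEnt (τ (e.symm (i₀, j₀))) :=
      Finset.inf'_le _ (Finset.mem_univ _)
    have hval : pureEnt (τ (e.symm (i₀, j₀))) = pureEnt (π i₀) + pureEnt (σ j₀) := by
      rw [htau]
      simp only [Equiv.apply_symm_apply]
      exact pureEnt_reorder_kron (hπ i₀) (hσ j₀)
    calc sInf S ≤ _ := csInf_le hbdd hmem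
      _ ≤ pureEnt (τ (e.symm (i₀, j₀))) := hle
      _ = _ + _ := hval
      _ = _ + _ := by rw [← hx0, ← hy0]
  rw [hEmG, hEm1, hEm2]
  have k2 : ∀ y ∈ S₂, sInf S - y ≤ sInf S₁ :=
    fun y hy => le_csInf hne₁ fun x hx => by
      have := key x hx y hy
      linarith
  have k3 : sInf S - sInf S₁ ≤ sInf S₂ :=
    le_csInf hne₂ fun y hy => by
      have := k2 y hy
      linarith
  linarith

end QAdditivity
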